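/- arXiv:1907.09991 — 2 statements merged into one kernel-verified Lean document; each statement's English description precedes it below -/
import Mathlib

section
/- Let f : [a,b] → ℝ be 1-Lipschitz. For integers k ≥ 0 and 0 ≤ i < 2^k, let p_{i,k} = a + i·2^{-k}(b-a) and Q_{i,k} = [p_{i,k}, p_{i+1,k}]. Say f is ς-semilinear on an interval [u,v] if |f((u+v)/2) - (f(u)+f(v))/2| ≤ ς(v-u). If m ≥ 0 is an integer, ς > 0, and f is ς-semilinear on Q_{i,k} for all integers k ∈ [0,m] and i ∈ [0, 2^k - 1], then f is (2ς + 2^{-m})-linear on [a,b], meaning that the function f_{[a,b]}(x) = ((b-x)f(a) + (x-a)f(b))/(b-a) satisfies sup_{x∈[a,b]} |f(x) - f_{[a,b]}(x)| ≤ (2ς + 2^{-m})(b-a). -/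
/-- The dyadic point `p_{i,k} = a + i·2^{-k}(b-a)`. -/
noncomputable def dyadicPt (a b : ℝ) (i k : ℕ) : ℝ := a + i * (b - a) / 2 ^ k

set_option maxHeartbeats 1000000 in
/-- If a 1-Lipschitz function `f` on `[a,b]` is `ς`-semilinear on every dyadic interval
`Q_{i,k} = [p_{i,k}, p_{i+1,k}]` for all `0 ≤ k ≤ m` and `0 ≤ i < 2^k`, then `f` is
`(2ς + 2^{-m})`-linear on `[a,b]`. -/
theorem stmt0 (a b ς : ℝ) (m : ℕ) (hab : a < b) (hς : 0 < ς) (f : ℝ → ℝ)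
    (hf : LipschitzOnWith 1 f (Set.Icc a b))
    (hsemi : ∀ k : ℕ, k ≤ m → ∀ i : ℕ, i < 2 ^ k →
      |f ((dyadicPt a b i k + dyadicPt a b (i + 1) k) / 2) -
          (f (dyadicPt a b i k) + f (dyadicPt a b (i + 1) k)) / 2|
        ≤ ς * (dyadicPt a b (i + 1) k - dyadicPt a b i k)) :
    ∀ x ∈ Set.Icc a b,
      |f x - ((b - x) * f a + (x - a) * f b) / (b - a)|
        ≤ (2 * ς + ((2 : ℝ) ^ m)⁻¹) * (b - a) := by
  have hba : (0:ℝ) < b - a := sub_pos.2 hab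
  set L : ℝ → ℝ := fun x => ((b - x) * f a + (x - a) * f b) / (b - a) with hLdef
  set g : ℝ → ℝ := fun x => f x - L x with hgdef
  -- basic facts about L
  have hLa : L a = f a := by simp only [hLdef]; field_simp; ring
  have hLb : L b = f b := by simp only [hLdef]; field_simp; ring
  have hfab : |f b - f a| ≤ b - a := by
    have := hf.dist_le_mul b ⟨hab.le, le_refl b⟩ a ⟨le_refl a, hab.le⟩
    simpa [Real.dist_eq, abs_of_pos hba] using this
  have hLlip : ∀ x y : ℝ, |L x - L y| ≤ |x - y| := by
    intro x y
    have : L x - L y = (x - y) * ((f b - f a) / (b - a)) := by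
      simp only [hLdef]; field_simp; ring
    rw [this, abs_mul, abs_div, abs_of_pos hba]
    have hdd : |f b - f a| / (b - a) ≤ 1 := (div_le_one hba).mpr hfab
    calc |x - y| * (|f b - f a| / (b - a)) ≤ |x - y| * 1 := by
          exact mul_le_mul_of_nonneg_left hdd (abs_nonneg _)
      _ = |x - y| := by ring
  have hLmid : ∀ u v : ℝ, L ((u + v) / 2) = (L u + L v) / 2 := by
    intro u v; simp only [hLdef]; field_simp; ring
  -- dyadic point identities
  have hpt_even : ∀ (i k : ℕ), dyadicPt a b (2 * i) (k + 1) = dyadicPt a b i k := by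
    intro i k; simp only [dyadicPt]; push_cast; field_simp; ring
  have hpt_odd : ∀ (i k : ℕ),
      (dyadicPt a b i k + dyadicPt a b (i + 1) k) / 2 = dyadicPt a b (2 * i + 1) (k + 1) := by
    intro i k; simp only [dyadicPt]; push_cast; field_simp; ring
  have hlen : ∀ (i k : ℕ), dyadicPt a b (i + 1) k - dyadicPt a b i k = (b - a) / 2 ^ k := by
    intro i k; simp only [dyadicPt]; push_cast; field_simp; ring
  have hmem : ∀ (i k : ℕ), i ≤ 2 ^ k → dyadicPt a b i k ∈ Set.Icc a b := by
    intro i k hi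
    have h2k : (0:ℝ) < 2 ^ k := by positivity
    have hicast : (i:ℝ) ≤ 2 ^ k := by exact_mod_cast hi
    constructor
    · simp only [dyadicPt]
      have : (0:ℝ) ≤ (i:ℝ) * (b - a) / 2 ^ k := by positivity
      linarith
    · simp only [dyadicPt]
      have : (i:ℝ) * (b - a) / 2 ^ k ≤ b - a := by
        rw [div_le_iff₀ h2k]; nlinarith
      linarith
  -- the key induction
  have key : ∀ k : ℕ, k ≤ m + 1 → ∀ i : ℕ, i ≤ 2 ^ k →
      |g (dyadicPt a b i k)| ≤ 2 * ς * (b - a) * (1 - ((2:ℝ) ^ k)⁻¹) := by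
    intro k
    induction k with
    | zero =>
      intro _ i hi
      interval_cases i
      · have : dyadicPt a b 0 0 = a := by simp [dyadicPt]
        rw [this]; simp [hgdef, hLa]
      · have : dyadicPt a b 1 0 = b := by simp [dyadicPt]
        rw [this]; simp [hgdef, hLb]
    | succ k ih =>
      intro hk i hi
      have hk' : k ≤ m + 1 := Nat.le_of_succ_le hk
      have hkm : k ≤ m := Nat.lt_succ_iff.mp hk
      have h2k : (0:ℝ) < 2 ^ k := by positivity
      have hEk : 2 * ς * (b - a) * (1 - ((2:ℝ) ^ k)⁻¹) + ς * ((b - a) / 2 ^ k)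
          = 2 * ς * (b - a) * (1 - ((2:ℝ) ^ (k+1))⁻¹) := by
        field_simp; ring
      rcases Nat.even_or_odd i with ⟨j, hj⟩ | ⟨j, hj⟩
      · -- even
        subst hj
        have hj2 : j ≤ 2 ^ k := by
          have hpow : 2 ^ (k + 1) = 2 * 2 ^ k := by ring
          omega
        have := ih hk' j hj2
        rw [show j + j = 2 * j by ring, hpt_even]
        refine this.trans ?_
        have hinv : ((2:ℝ) ^ (k+1))⁻¹ ≤ ((2:ℝ) ^ k)⁻¹ := by
          apply inv_anti₀ h2k
          rw [pow_succ]; nlinarith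
        have h0 : (0:ℝ) ≤ 2 * ς * (b - a) := by positivity
        nlinarith
      · -- odd
        subst hj
        have hj2 : j < 2 ^ k := by
          have hpow : 2 ^ (k + 1) = 2 * 2 ^ k := by ring
          omega
        have hsem := hsemi k hkm j hj2
        have hu := ih hk' j hj2.le
        have hv := ih hk' (j + 1) hj2
        set u := dyadicPt a b j k
        set v := dyadicPt a b (j + 1) k
        have hgsem : |g ((u + v) / 2) - (g u + g v) / 2| ≤ ς * ((b - a) / 2 ^ k) := by
          have : g ((u + v) / 2) - (g u + g v) / 2
              = f ((u + v) / 2) - (f u + f v) / 2 := by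
            simp only [hgdef]; rw [hLmid u v]; ring
          rw [this]
          calc |f ((u + v) / 2) - (f u + f v) / 2| ≤ ς * (v - u) := hsem
            _ = ς * ((b - a) / 2 ^ k) := by rw [hlen]
        have hmidpt : (u + v) / 2 = dyadicPt a b (2 * j + 1) (k + 1) := hpt_odd j k
        rw [← hmidpt]
        have habs2 : |(g u + g v) / 2| ≤ (|g u| + |g v|) / 2 := by
          rw [abs_div, abs_two]
          gcongr
          exact abs_add_le _ _
        have hstep : |g ((u + v) / 2)|
            ≤ |g ((u + v) / 2) - (g u + g v) / 2| + (|g u| + |g v|) / 2 := by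
          calc |g ((u + v) / 2)|
              = |(g ((u + v) / 2) - (g u + g v) / 2) + (g u + g v) / 2| := by
                rw [sub_add_cancel]
            _ ≤ |g ((u + v) / 2) - (g u + g v) / 2| + |(g u + g v) / 2| := abs_add_le _ _
            _ ≤ _ := by linarith [habs2]
        refine hstep.trans ?_
        rw [← hEk]
        linarith
  -- conclusion
  intro x hx
  obtain ⟨hax, hxb⟩ := hx
  have hN : (0:ℝ) < 2 ^ (m + 1) := by positivity
  set h : ℝ := (b - a) / 2 ^ (m + 1) with hhdef
  have hh : 0 < h := by positivity
  set t : ℝ := (x - a) / h with htdef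
  have ht0 : 0 ≤ t := div_nonneg (by linarith) hh.le
  have htN : t ≤ 2 ^ (m + 1) := by
    rw [htdef, hhdef, div_div_eq_mul_div, div_le_iff₀ hba]
    nlinarith
  set i : ℕ := min (Nat.floor t) (2 ^ (m + 1) - 1) with hidef
  have hiN : i ≤ 2 ^ (m + 1) - 1 := min_le_right _ _
  have hiN' : i ≤ 2 ^ (m + 1) := le_trans hiN (Nat.sub_le _ _)
  have hit : (i:ℝ) ≤ t := by
    calc (i:ℝ) ≤ (Nat.floor t : ℝ) := by exact_mod_cast min_le_left _ _
      _ ≤ t := Nat.floor_le ht0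
  have hti : t ≤ (i:ℝ) + 1 := by
    rcases le_or_gt (Nat.floor t) (2 ^ (m + 1) - 1) with hc | hc
    · have : i = Nat.floor t := by omega
      rw [this]
      exact (Nat.lt_floor_add_one t).le
    · have : i = 2 ^ (m + 1) - 1 := by omega
      rw [this]
      have : ((2 ^ (m + 1) - 1 : ℕ) : ℝ) + 1 = 2 ^ (m + 1) := by
        have h1 : (1:ℕ) ≤ 2 ^ (m + 1) := Nat.one_le_two_pow
        push_cast [h1]
        ring
      rw [this]
      exact htN
  set p := dyadicPt a b i (m + 1) with hpdef
  have hxp : x - p = (t - i) * h := by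
    have hxt : x - a = t * h := by rw [htdef]; field_simp
    simp only [hpdef, dyadicPt, ← hhdef]
    have : (i:ℝ) * (b - a) / 2 ^ (m+1) = i * h := by rw [hhdef]; ring
    rw [this]; linarith [hxt]
  have habs_xp : |x - p| ≤ h := by
    rw [hxp, abs_mul, abs_of_pos hh]
    have h1 : |t - (i:ℝ)| ≤ 1 := abs_le.mpr ⟨by linarith, by linarith⟩
    nlinarith
  have hpmem : p ∈ Set.Icc a b := hmem i (m + 1) hiN'
  have hgp := key (m + 1) le_rfl i hiN'
  rw [← hpdef] at hgp
  clear_value t i p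
  have hgx : |g x - g p| ≤ 2 * h := by
    have h1 : |f x - f p| ≤ |x - p| := by
      have := hf.dist_le_mul x ⟨hax, hxb⟩ p hpmem
      simpa [Real.dist_eq] using this
    have h2 := hLlip x p
    calc |g x - g p| = |(f x - f p) - (L x - L p)| := by simp only [hgdef]; congr 1; ring
      _ ≤ |f x - f p| + |L x - L p| := abs_sub _ _
      _ ≤ |x - p| + |x - p| := add_le_add h1 h2
      _ ≤ 2 * h := by linarith [habs_xp]
  have : |g x| ≤ |g x - g p| + |g p| := by
    calc |g x| = |(g x - g p) + g p| := by rw [sub_add_cancel]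
      _ ≤ _ := abs_add_le _ _
  have hfinal : |g x| ≤ 2 * ς * (b - a) + 2 * h := by
    have hEle : 2 * ς * (b - a) * (1 - ((2:ℝ) ^ (m+1))⁻¹) ≤ 2 * ς * (b - a) := by
      have hc : (0:ℝ) ≤ 2 * ς * (b - a) * ((2:ℝ) ^ (m+1))⁻¹ := by positivity
      nlinarith [hc]
    linarith
  have h2h : 2 * h = ((2:ℝ) ^ m)⁻¹ * (b - a) := by
    rw [hhdef, pow_succ]; field_simp
  have hrw : f x - ((b - x) * f a + (x - a) * f b) / (b - a) = g x := by
    simp only [hgdef, hLdef]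
  rw [hrw]
  calc |g x| ≤ 2 * ς * (b - a) + 2 * h := hfinal
    _ = (2 * ς + ((2:ℝ) ^ m)⁻¹) * (b - a) := by rw [h2h]; ring
end

section
/- Let a = (a_{-m}, ..., a_n) be a strictly increasing integer sequence with a₀ ≤ 0 < a₁, and suppose there is ε ∈ (0,1) such that for each integer j ∈ [B, n] one has a_j ∈ ((1+ε) j, ε^{-1} j) and for each j ∈ [-m, -B] one has a_j ∈ (ε^{-1} j, (1+ε) j), for some B ≥ 1. Then for any w ∈ ℂ with |w| ≤ 5B and dist(w, ℤ) ≥ 1/4, one has ∏_{j=-m}^{n} |w - a_j|^{-1} ≤ 16, i.e., the product of reciprocal distances from w to all points of the configuration within the specified structure is bounded by 16. -/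
/-- For a strictly increasing integer configuration `a = (a_{-m},…,a_n)` with `a₀ ≤ 0 < a₁`
growing at least linearly away from the origin, and any `w ∈ ℂ` with `|w| ≤ 5B` and
`dist(w, ℤ) ≥ 1/4`, the product of reciprocal distances `∏_j |w - a_j|⁻¹` is at most `16`. -/
theorem stmt18 (ε B : ℝ) (hε : ε ∈ Set.Ioo (0 : ℝ) 1) (hB : 1 ≤ B)
    (m n : ℕ) (hn : 1 ≤ n) (a : ℤ → ℤ)
    (hmono : StrictMonoOn a (Set.Icc (-(m : ℤ)) (n : ℤ)))
    (ha0 : a 0 ≤ 0) (ha1 : 0 < a 1)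
    (hpos : ∀ j : ℤ, B ≤ (j : ℝ) → j ≤ (n : ℤ) →
      (1 + ε) * (j : ℝ) < (a j : ℝ) ∧ (a j : ℝ) < ε⁻¹ * (j : ℝ))
    (hneg : ∀ j : ℤ, -(m : ℤ) ≤ j → (j : ℝ) ≤ -B →
      ε⁻¹ * (j : ℝ) < (a j : ℝ) ∧ (a j : ℝ) < (1 + ε) * (j : ℝ))
    (w : ℂ) (hw : ‖w‖ ≤ 5 * B)
    (hdist : ∀ k : ℤ, (1 : ℝ) / 4 ≤ ‖w - (k : ℂ)‖) :
    ∏ j ∈ Finset.Icc (-(m : ℤ)) (n : ℤ), (‖w - ((a j : ℤ) : ℂ)‖)⁻¹ ≤ 16 := by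
  set I := Finset.Icc (-(m : ℤ)) (n : ℤ) with hI
  have habs_pos : ∀ j : ℤ, 0 < ‖w - ((a j : ℤ) : ℂ)‖ := fun j =>
    lt_of_lt_of_le (by norm_num) (hdist (a j))
  set S := I.filter (fun j => ‖w - ((a j : ℤ) : ℂ)‖ < 1) with hS
  -- at most two integers lie within distance 1 of w
  have hcard : S.card ≤ 2 := by
    have hinj : Set.InjOn a S := by
      intro x hx y hy h
      have hx' : x ∈ Set.Icc (-(m : ℤ)) (n : ℤ) := by
        have := (Finset.mem_filter.1 hx).1
        simpa [hI, Set.mem_Icc] using Finset.mem_Icc.1 this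
      have hy' : y ∈ Set.Icc (-(m : ℤ)) (n : ℤ) := by
        have := (Finset.mem_filter.1 hy).1
        simpa [hI, Set.mem_Icc] using Finset.mem_Icc.1 this
      exact hmono.injOn hx' hy' h
    have hcard_eq : (S.image a).card = S.card := Finset.card_image_of_injOn hinj
    have hsub : S.image a ⊆ Finset.Icc (⌈w.re⌉ - 1) ⌈w.re⌉ := by
      intro k hk
      obtain ⟨j, hj, rfl⟩ := Finset.mem_image.1 hk
      have h1 : ‖w - ((a j : ℤ) : ℂ)‖ < 1 := (Finset.mem_filter.1 hj).2
      have h2 : |w.re - (a j : ℝ)| < 1 := by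
        have := Complex.abs_re_le_norm (w - ((a j : ℤ) : ℂ))
        simpa using lt_of_le_of_lt this h1
      rw [abs_lt] at h2
      have hc1 : (w.re : ℝ) ≤ (⌈w.re⌉ : ℝ) := Int.le_ceil _
      have hc2 : (⌈w.re⌉ : ℝ) < w.re + 1 := Int.ceil_lt_add_one _
      have hk1 : ((a j : ℤ) : ℝ) < (⌈w.re⌉ : ℝ) + 1 := by linarith [h2.2]
      have hk2 : ((⌈w.re⌉ : ℝ) - 2) < ((a j : ℤ) : ℝ) := by linarith [h2.1]
      have hk1' : a j < ⌈w.re⌉ + 1 := by exact_mod_cast hk1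
      have hk2' : ⌈w.re⌉ - 2 < a j := by exact_mod_cast hk2
      exact Finset.mem_Icc.2 ⟨by omega, by omega⟩
    calc S.card = (S.image a).card := hcard_eq.symm
      _ ≤ (Finset.Icc (⌈w.re⌉ - 1) ⌈w.re⌉).card := Finset.card_le_card hsub
      _ ≤ 2 := by rw [Int.card_Icc]; omega
  -- split the product
  have hsplit := Finset.prod_filter_mul_prod_filter_not I
    (fun j => ‖w - ((a j : ℤ) : ℂ)‖ < 1)
    (fun j => (‖w - ((a j : ℤ) : ℂ)‖)⁻¹)
  rw [← hsplit]
  have h1 : ∏ j ∈ S, (‖w - ((a j : ℤ) : ℂ)‖)⁻¹ ≤ 16 := by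
    have hle : ∀ j ∈ S, (‖w - ((a j : ℤ) : ℂ)‖)⁻¹ ≤ 4 := by
      intro j _
      rw [inv_le_comm₀ (habs_pos j) (by norm_num)]
      calc (4 : ℝ)⁻¹ = 1/4 := by norm_num
        _ ≤ _ := hdist (a j)
    calc ∏ j ∈ S, (‖w - ((a j : ℤ) : ℂ)‖)⁻¹ ≤ 4 ^ S.card := by
          calc ∏ j ∈ S, (‖w - ((a j : ℤ) : ℂ)‖)⁻¹
              ≤ ∏ _j ∈ S, (4 : ℝ) :=
                Finset.prod_le_prod (fun j _ => by positivity) hle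
            _ = 4 ^ S.card := Finset.prod_const 4
      _ ≤ 4 ^ 2 := pow_le_pow_right₀ (by norm_num) hcard
      _ = 16 := by norm_num
  have h2 : ∏ j ∈ I.filter (fun j => ¬ ‖w - ((a j : ℤ) : ℂ)‖ < 1),
      (‖w - ((a j : ℤ) : ℂ)‖)⁻¹ ≤ 1 := by
    apply Finset.prod_le_one
    · intro j _; positivity
    · intro j hj
      have := (Finset.mem_filter.1 hj).2
      exact inv_le_one_of_one_le₀ (not_lt.1 this)
  have hpos2 : (0 : ℝ) ≤ ∏ j ∈ S, (‖w - ((a j : ℤ) : ℂ)‖)⁻¹ :=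
    Finset.prod_nonneg fun j _ => by positivity
  calc _ ≤ (16 : ℝ) * 1 := mul_le_mul h1 h2
        (Finset.prod_nonneg fun j _ => by positivity) (by norm_num)
    _ = 16 := by norm_num
end
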